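/- Let 𝒟 = [n_1] × … × [n_d] be a d-dimensional grid graph (all n_i ≥ 2) such that at most one index i has n_i > 3 and ∏_{i=1}^{d} min(n_i, 3) is even. Then there exists an agent algorithm with 0 bits of memory and sensing range V = 1 that patrols 𝒟. -/

import Mathlib

open Finset

/-- Manhattan (ℓ¹) norm of an integer vector. -/
def manhattan {d : ℕ} (p : Fin d → ℤ) : ℤ := ∑ i, |p i|

/-- The grid graph vertex set `[n 0] × ⋯ × [n (d-1)]`. -/
def grid {d : ℕ} (n : Fin d → ℕ) : Set (Fin d → ℤ) :=
  {p | ∀ i, 1 ≤ p i ∧ p i ≤ (n i : ℤ)}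

/-- Sensing data `S_V(p)`: relative positions of points of `D` within
Manhattan distance `V` of `p`. -/
def sense {d : ℕ} (D : Set (Fin d → ℤ)) (V : ℕ) (p : Fin d → ℤ) : Set (Fin d → ℤ) :=
  {q | p + q ∈ D ∧ manhattan q ≤ (V : ℤ)}

/-- A deterministic agent algorithm with `b` bits of memory: maps sensing data and a
memory state to a step and a new memory state. -/
structure Agent (d b : ℕ) where
  act : Set (Fin d → ℤ) → (Fin b → Bool) → (Fin d → ℤ) × (Fin b → Bool)

namespace Agent

/-- Validity: at every vertex of `D`, in every memory state, the chosen step is a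
unit step leading to a vertex of `D`. -/
def Valid {d b : ℕ} (A : Agent d b) (D : Set (Fin d → ℤ)) (V : ℕ) : Prop :=
  ∀ p ∈ D, ∀ m, manhattan (A.act (sense D V p) m).1 = 1 ∧
    (A.act (sense D V p) m).1 ∈ sense D V p

/-- The trajectory (position, memory) of the agent after `t` steps, starting from
position `v` and memory state `m`. -/
def traj {d b : ℕ} (A : Agent d b) (D : Set (Fin d → ℤ)) (V : ℕ)
    (v : Fin d → ℤ) (m : Fin b → Bool) : ℕ → (Fin d → ℤ) × (Fin b → Bool)
  | 0 => (v, m)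
  | t + 1 =>
      let s := Agent.traj A D V v m t
      (s.1 + (A.act (sense D V s.1) s.2).1, (A.act (sense D V s.1) s.2).2)

/-- The agent patrols `D`: it is valid, and from any initial position in `D` and any
initial memory state, its trajectory visits every vertex of `D` within finitely many
steps. -/
def Patrols {d b : ℕ} (A : Agent d b) (D : Set (Fin d → ℤ)) (V : ℕ) : Prop :=
  A.Valid D V ∧ ∀ v₁ ∈ D, ∀ m, ∀ v ∈ D, ∃ t, (A.traj D V v₁ m t).1 = v

end Agent

/-- The graph on a set of integer vectors with edges between points at Manhattan
distance 1. -/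
def latticeGraph {d : ℕ} (S : Set (Fin d → ℤ)) : SimpleGraph S where
  Adj p q := manhattan (p.1 - q.1) = 1
  symm := by
    constructor
    intro p q h
    simp only [manhattan, Pi.sub_apply] at h ⊢
    simpa [abs_sub_comm] using h
  loopless := by
    constructor
    intro p h
    simp [manhattan] at h

/-- The `d`-dimensional grid graph `[n 0] × ⋯ × [n (d-1)]`. -/
def gridGraph {d : ℕ} (n : Fin d → ℕ) : SimpleGraph (grid n) :=
  latticeGraph (grid n)

/-! ### Auxiliary development -/

section PatrolAux

variable {d : ℕ}

lemma manhattan_single (i : Fin d) (a : ℤ) : manhattan (Pi.single i a) = |a| := by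
  classical
  simp only [manhattan, Pi.single_apply]
  rw [Finset.sum_eq_single i]
  · simp
  · intro b _ hb; simp [hb]
  · simp

lemma mem_grid {n : Fin d → ℕ} {p : Fin d → ℤ} :
    p ∈ grid n ↔ ∀ i, 1 ≤ p i ∧ p i ≤ (n i : ℤ) := Iff.rfl

lemma mem_sense {D : Set (Fin d → ℤ)} {V : ℕ} {p q : Fin d → ℤ} :
    q ∈ sense D V p ↔ p + q ∈ D ∧ manhattan q ≤ (V : ℤ) := Iff.rfl

lemma single_mem_sense {n : Fin d → ℕ} {p : Fin d → ℤ} (hp : p ∈ grid n) (i : Fin d)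
    (a : ℤ) (ha : |a| = 1) :
    Pi.single i a ∈ sense (grid n) 1 p ↔ (1 ≤ p i + a ∧ p i + a ≤ (n i : ℤ)) := by
  classical
  rw [mem_sense, manhattan_single, ha]
  simp only [Nat.cast_one, le_refl, and_true]
  constructor
  · intro h
    have := h i
    simpa [Pi.single_eq_same] using this
  · intro h i'
    by_cases hi : i' = i
    · subst hi; simpa using h
    · have := hp i'
      simp [Pi.single_apply, hi, this]

/-- A cyclic enumeration of the part of the grid where all coordinates outside `s`
are frozen to `1`. -/
structure PCyc (n : Fin d → ℕ) (s : Finset (Fin d)) where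
  M : ℕ
  e : ℕ → Fin d → ℤ
  Mpos : 0 < M
  Meven : Even M
  mem : ∀ t, e t ∈ grid n
  frozen : ∀ t, ∀ i ∉ s, e t i = 1
  per : ∀ t, e (t + M) = e t
  surj : ∀ p ∈ grid n, (∀ i ∉ s, p i = 1) → ∃ t, t < M ∧ e t = p
  inj : ∀ t t', t < M → t' < M → e t = e t' → t = t'
  adj : ∀ t, manhattan (e (t + 1) - e t) = 1

namespace PCyc

variable {n : Fin d → ℕ} {s : Finset (Fin d)}

lemma e_mod (C : PCyc n s) (t : ℕ) : C.e t = C.e (t % C.M) := by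
  induction t using Nat.strong_induction_on with
  | _ t ih =>
    by_cases h : t < C.M
    · rw [Nat.mod_eq_of_lt h]
    · push_neg at h
      have h1 : t - C.M + C.M = t := Nat.sub_add_cancel h
      have h2 : t - C.M < t := by have := C.Mpos; omega
      rw [← h1, C.per, ih _ h2, Nat.add_mod_right]

lemma e_congr (C : PCyc n s) {a b : ℕ} (h : a % C.M = b % C.M) : C.e a = C.e b := by
  rw [C.e_mod a, C.e_mod b, h]

lemma step_congr (C : PCyc n s) {a b : ℕ} (h : a % C.M = b % C.M) :
    C.e (a + 1) - C.e a = C.e (b + 1) - C.e b := by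
  have h' : (a + 1) % C.M = (b + 1) % C.M := by
    rw [Nat.add_mod, h, ← Nat.add_mod]
  rw [C.e_congr h, C.e_congr h']

lemma mod_eq_of_e_eq (C : PCyc n s) {a b : ℕ} (h : C.e a = C.e b) :
    a % C.M = b % C.M := by
  exact C.inj _ _ (Nat.mod_lt _ C.Mpos) (Nat.mod_lt _ C.Mpos)
    (by rw [← C.e_mod, ← C.e_mod, h])

end PCyc

end PatrolAux
section PatrolAux2

variable {d : ℕ}

/-- The all-ones vertex. -/
def onev (d : ℕ) : Fin d → ℤ := fun _ => 1

open Function in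
/-- The base two-step cycle in direction `j`. -/
noncomputable def baseCyc (n : Fin d → ℕ) (hn : ∀ i, 2 ≤ n i) (j : Fin d) (hj : n j = 2) :
    PCyc n {j} := by
  classical
  refine
    { M := 2
      e := fun t => if t % 2 = 0 then onev d else Function.update (onev d) j 2
      Mpos := by norm_num
      Meven := by decide
      mem := ?_
      frozen := ?_
      per := ?_
      surj := ?_
      inj := ?_
      adj := ?_ }
  · intro t i
    have h2 := hn i
    have h2' : (1:ℤ) ≤ (n i : ℤ) := by exact_mod_cast Nat.one_le_iff_ne_zero.mpr (by omega)
    split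
    · exact ⟨le_rfl, h2'⟩
    · rcases eq_or_ne i j with rfl | hij
      · rw [Function.update_self, hj]
        norm_num
      · rw [Function.update_of_ne hij]
        exact ⟨le_rfl, h2'⟩
  · intro t i hi
    simp only [Finset.mem_singleton] at hi
    split <;> simp [onev, Function.update_apply, hi]
  · intro t; simp [Nat.add_mod_right]
  · intro p hp hfr
    have hj1 : 1 ≤ p j := (hp j).1
    have hj2 : p j ≤ 2 := by have := (hp j).2; rw [hj] at this; exact_mod_cast this
    rcases eq_or_lt_of_le hj1 with h1 | h1
    · refine ⟨0, by norm_num, ?_⟩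
      simp only [show ((0:ℕ) % 2 = 0) from rfl, if_true]
      funext i
      rcases eq_or_ne i j with rfl | hij
      · simp [onev, ← h1]
      · simp [onev, hfr i (by simpa using hij)]
    · refine ⟨1, by norm_num, ?_⟩
      have : p j = 2 := by omega
      simp only [show ¬((1:ℕ) % 2 = 0) by norm_num, if_false]
      funext i
      rcases eq_or_ne i j with rfl | hij
      · simp [Function.update_self, this]
      · simp [Function.update_apply, hij, onev, hfr i (by simpa using hij)]
  · intro t t' ht ht' he
    have hne : onev d ≠ Function.update (onev d) j 2 := by
      intro h
      have := congrFun h j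
      simp [onev, Function.update_self] at this
    interval_cases t <;> interval_cases t' <;> simp_all
  · intro t
    have key : ∀ b : Bool,
        manhattan ((if b then onev d else Function.update (onev d) j 2) -
          (if b then Function.update (onev d) j 2 else onev d)) = 1 := by
      intro b
      have h1 : (Function.update (onev d) j 2 - onev d) = Pi.single j 1 := by
        funext i
        rcases eq_or_ne i j with rfl | hij
        · simp [onev, Function.update_self]
        · simp [onev, Function.update_apply, hij, Pi.single_apply]
      have h2 : (onev d - Function.update (onev d) j 2) = Pi.single j (-1) := by
        funext i
        rcases eq_or_ne i j with rfl | hij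
        · simp [onev, Function.update_self]
        · simp [onev, Function.update_apply, hij, Pi.single_apply]
      cases b
      · simp [h1, manhattan_single]
      · simp [h2, manhattan_single]
    rcases Nat.even_or_odd t with he | ho
    · have h0 : t % 2 = 0 := Nat.even_iff.mp he
      have h1 : (t + 1) % 2 = 1 := by omega
      simpa [h0, h1] using key false
    · have h0 : t % 2 = 1 := Nat.odd_iff.mp ho
      have h1 : (t + 1) % 2 = 0 := by omega
      simpa [h0, h1] using key true

end PatrolAux2
section PatrolAux3

variable {d : ℕ}

/-- One layer of the cycle construction: sweep coordinate `i` back and forth along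
the base cycle `c`. -/
noncomputable def layF (N : ℕ) (i : Fin d) (c : ℕ → Fin d → ℤ) (t : ℕ) : Fin d → ℤ :=
  if t % (2*N) < N then Function.update (c (2*(t/(2*N)))) i (((t % (2*N) : ℕ) : ℤ) + 1)
  else Function.update (c (2*(t/(2*N)) + 1)) i (2*(N:ℤ) - ((t % (2*N) : ℕ) : ℤ))

noncomputable def layE (N M : ℕ) (i : Fin d) (c : ℕ → Fin d → ℤ) (t : ℕ) : Fin d → ℤ :=
  layF N i c (t % (N * M))

lemma div_mod_succ₁ (m : ℕ) (t : ℕ) (h1 : t % m + 1 < m) :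
    (t+1) % m = t % m + 1 ∧ (t+1) / m = t / m := by
  have h := Nat.div_add_mod t m
  constructor
  · conv_lhs => rw [← h, Nat.add_assoc]
    rw [Nat.mul_add_mod]
    exact Nat.mod_eq_of_lt h1
  · conv_lhs => rw [← h, Nat.add_assoc]
    rw [Nat.mul_add_div (by omega)]
    rw [Nat.div_eq_of_lt h1, Nat.add_zero]

lemma div_mod_succ₂ (m : ℕ) (t : ℕ) (hm : 0 < m) (h1 : t % m + 1 = m) :
    (t+1) % m = 0 ∧ (t+1) / m = t / m + 1 := by
  have h := Nat.div_add_mod t m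
  have ht : t + 1 = m * (t / m + 1) := by rw [Nat.mul_add, Nat.mul_one]; omega
  rw [ht]
  exact ⟨Nat.mul_mod_right _ _, Nat.mul_div_cancel_left _ hm⟩

section StepLemmas

variable {N : ℕ} {i : Fin d} {c : ℕ → Fin d → ℤ}

lemma layF_step_A {t : ℕ} (h : t % (2*N) + 1 < N) :
    layF N i c (t+1) - layF N i c t = Pi.single i 1 := by
  obtain ⟨hm, hd⟩ := div_mod_succ₁ (2*N) t (by omega)
  funext x
  rcases eq_or_ne x i with rfl | hx
  · simp only [layF, Pi.sub_apply, hm, hd, if_pos h, if_pos (show t % (2*N) < N by omega),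
      Function.update_self, Pi.single_eq_same]
    push_cast; ring
  · simp only [layF, Pi.sub_apply, hm, hd, if_pos h, if_pos (show t % (2*N) < N by omega),
      Function.update_of_ne hx, Pi.single_eq_of_ne hx, sub_self]

lemma layF_step_B {t : ℕ} (hN : 0 < N) (hfi : ∀ j, c j i = 1) (h : t % (2*N) + 1 = N) :
    layF N i c (t+1) - layF N i c t = c (2*(t/(2*N)) + 1) - c (2*(t/(2*N))) := by
  obtain ⟨hm, hd⟩ := div_mod_succ₁ (2*N) t (by omega)
  funext x
  rcases eq_or_ne x i with rfl | hx
  · simp only [layF, Pi.sub_apply, hm, hd, if_neg (show ¬ (t % (2*N) + 1 < N) by omega),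
      if_pos (show t % (2*N) < N by omega), Function.update_self, hfi]
    omega
  · simp only [layF, Pi.sub_apply, hm, hd, if_neg (show ¬ (t % (2*N) + 1 < N) by omega),
      if_pos (show t % (2*N) < N by omega), Function.update_of_ne hx]

lemma layF_step_C {t : ℕ} (h1 : N ≤ t % (2*N)) (h2 : t % (2*N) + 1 < 2*N) :
    layF N i c (t+1) - layF N i c t = Pi.single i (-1) := by
  obtain ⟨hm, hd⟩ := div_mod_succ₁ (2*N) t h2
  funext x
  rcases eq_or_ne x i with rfl | hx
  · simp only [layF, Pi.sub_apply, hm, hd, if_neg (show ¬ (t % (2*N) + 1 < N) by omega),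
      if_neg (show ¬ (t % (2*N) < N) by omega), Function.update_self, Pi.single_eq_same]
    push_cast; ring
  · simp only [layF, Pi.sub_apply, hm, hd, if_neg (show ¬ (t % (2*N) + 1 < N) by omega),
      if_neg (show ¬ (t % (2*N) < N) by omega), Function.update_of_ne hx,
      Pi.single_eq_of_ne hx, sub_self]

lemma layF_step_D {t : ℕ} (hN : 0 < N) (hfi : ∀ j, c j i = 1) (h : t % (2*N) + 1 = 2*N) :
    layF N i c (t+1) - layF N i c t = c (2*(t/(2*N)) + 2) - c (2*(t/(2*N)) + 1) := by
  obtain ⟨hm, hd⟩ := div_mod_succ₂ (2*N) t (by omega) h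
  funext x
  have harith : 2*(t/(2*N)+1) = 2*(t/(2*N)) + 2 := by ring
  rcases eq_or_ne x i with rfl | hx
  · simp only [layF, Pi.sub_apply, hm, hd, if_pos hN,
      if_neg (show ¬ (t % (2*N) < N) by omega), Function.update_self, harith, hfi,
      Nat.cast_zero]
    omega
  · simp only [layF, Pi.sub_apply, hm, hd, if_pos hN,
      if_neg (show ¬ (t % (2*N) < N) by omega), Function.update_of_ne hx, harith,
      Nat.cast_zero]

lemma layF_top {M m : ℕ} (hN : 0 < N) (hm : M = 2*m) (hc : c (2*m) = c 0) :
    layF N i c (N*M) = layF N i c 0 := by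
  have h1 : N*M = (2*N)*m := by rw [hm]; ring
  have h2 : (N*M) % (2*N) = 0 := by rw [h1]; exact Nat.mul_mod_right _ _
  have h3 : (N*M) / (2*N) = m := by rw [h1]; exact Nat.mul_div_cancel_left _ (by omega)
  simp only [layF, h2, h3, Nat.zero_mod, Nat.zero_div, if_pos hN, Nat.mul_zero, hc,
    Nat.cast_zero]

lemma layF_i_apply (t : ℕ) :
    layF N i c t i = if t % (2*N) < N then ((t % (2*N) : ℕ) : ℤ) + 1
      else 2*(N:ℤ) - ((t % (2*N) : ℕ) : ℤ) := by
  unfold layF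
  split <;> simp [Function.update_self]

lemma layF_apply_ne (t : ℕ) {x : Fin d} (hx : x ≠ i) :
    layF N i c t x = c (2*(t/(2*N)) + (if t % (2*N) < N then 0 else 1)) x := by
  unfold layF
  split <;> simp_all [Function.update_of_ne hx]

lemma layF_bpart (hfi : ∀ j, c j i = 1) (t : ℕ) :
    Function.update (layF N i c t) i 1 =
      c (2*(t/(2*N)) + (if t % (2*N) < N then 0 else 1)) := by
  funext x
  rcases eq_or_ne x i with rfl | hx
  · rw [Function.update_self, hfi]
  · rw [Function.update_of_ne hx, layF_apply_ne t hx]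

end StepLemmas

end PatrolAux3
section PatrolAux4

variable {d : ℕ} {n : Fin d → ℕ} {s : Finset (Fin d)}

lemma grid_update {p : Fin d → ℤ} (hp : p ∈ grid n) (i : Fin d) {v : ℤ}
    (h1 : 1 ≤ v) (h2 : v ≤ (n i : ℤ)) : Function.update p i v ∈ grid n := by
  intro x
  rcases eq_or_ne x i with rfl | hx
  · rw [Function.update_self]; exact ⟨h1, h2⟩
  · rw [Function.update_of_ne hx]; exact hp x

section LayE

variable {N M : ℕ} {i : Fin d} {c : ℕ → Fin d → ℤ}

lemma layF_mem (hc : ∀ t, c t ∈ grid n) (hNn : N = n i) (hN : 0 < N) (t : ℕ) :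
    layF N i c t ∈ grid n := by
  have hr : t % (2*N) < 2*N := Nat.mod_lt _ (by omega)
  unfold layF
  split
  · exact grid_update (hc _) i (by omega) (by rw [← hNn]; omega)
  · exact grid_update (hc _) i (by omega) (by rw [← hNn]; omega)

lemma layE_eq (t : ℕ) : layE N M i c t = layF N i c (t % (N*M)) := rfl

lemma layE_succ (hNM : 0 < N*M) (t : ℕ) :
    layE N M i c (t+1) = layF N i c ((t % (N*M) + 1) % (N*M)) := by
  rw [layE_eq, Nat.mod_add_mod]

/-- Index of the base-cycle point used at time `t`. -/
def lidx (N : ℕ) (t : ℕ) : ℕ := 2*(t/(2*N)) + (if t % (2*N) < N then 0 else 1)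

lemma lidx_lt {m : ℕ} (hN : 0 < N) (hm : M = 2*m) {t : ℕ} (ht : t < N*M) :
    lidx N t < M := by
  have h1 : N*M = (2*N)*m := by rw [hm]; ring
  have h2 : t / (2*N) < m := by
    rw [Nat.div_lt_iff_lt_mul (by omega)]
    calc t < N*M := ht
    _ = m * (2*N) := by rw [h1]; ring
  unfold lidx
  split <;> omega

lemma lidx_parity {t t' : ℕ} (h : lidx N t = lidx N t') :
    (t % (2*N) < N ↔ t' % (2*N) < N) ∧ t/(2*N) = t'/(2*N) := by
  unfold lidx at h
  constructor
  · constructor <;> intro hh <;> by_contra hh' <;> simp [hh, hh'] at h <;> omega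
  · split at h <;> split at h <;> omega

lemma layF_bpart' (hfi : ∀ j, c j i = 1) (t : ℕ) :
    Function.update (layF N i c t) i 1 = c (lidx N t) := layF_bpart hfi t

/-- The mod-`2N` residue at the last time step. -/
lemma last_residue {m : ℕ} (hN : 0 < N) (hm : M = 2*m) (hm0 : 0 < m) {a : ℕ}
    (ha : a + 1 = N*M) : a % (2*N) = 2*N - 1 := by
  have h1 : 2*N*(m-1) + 2*N = 2*N*m := by
    rw [← Nat.mul_succ]
    congr 1
    omega
  have h2 : N*M = 2*N*m := by rw [hm]; ring
  have h3 : a = 2*N*(m-1) + (2*N - 1) := by omega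
  rw [h3, Nat.mul_add_mod]
  exact Nat.mod_eq_of_lt (by omega)

end LayE

/-- The layering step: from a cycle on the coordinates in `s`, build a cycle on the
coordinates in `insert i s`. -/
lemma layer_ex (C : PCyc n s) (i : Fin d) (hi : i ∉ s) (hn2 : 2 ≤ n i) :
    ∃ D : PCyc n (insert i s), D.M = n i * C.M ∧ D.e = layE (n i) C.M i C.e := by
  classical
  set N := n i with hNdef
  set M := C.M with hMdef
  have hN : 0 < N := by omega
  have hfi : ∀ j, C.e j i = 1 := fun j => C.frozen j i hi
  obtain ⟨m, hm'⟩ := C.Meven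
  have hm : M = 2*m := by omega
  have hm0 : 0 < m := by have := C.Mpos; omega
  have hNM : 0 < N*M := Nat.mul_pos hN C.Mpos
  have hNM2 : N*M = 2*N*m := by rw [hm]; ring
  have hper2m : C.e (2*m) = C.e 0 := by
    rw [← hm]
    simpa using C.per 0
  refine ⟨{ M := N*M, e := layE N M i C.e, Mpos := hNM,
            Meven := by rw [hm]; exact ⟨N*m, by ring⟩,
            mem := ?_, frozen := ?_, per := ?_, surj := ?_, inj := ?_, adj := ?_ },
          rfl, rfl⟩
  · intro t
    exact layF_mem C.mem rfl hN _
  · intro t x hx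
    simp only [Finset.mem_insert, not_or] at hx
    rw [layE_eq, layF_apply_ne _ hx.1]
    exact C.frozen _ x hx.2
  · intro t
    rw [layE_eq, layE_eq, Nat.add_mod_right]
  · -- surjectivity
    intro p hp hfr
    have hpi1 : 1 ≤ p i := (hp i).1
    have hpi2 : p i ≤ (N:ℤ) := (hp i).2
    set b := Function.update p i 1 with hbdef
    have hb : b ∈ grid n := grid_update hp i le_rfl (by exact_mod_cast Nat.one_le_cast.mpr hN)
    have hbfr : ∀ x ∉ s, b x = 1 := by
      intro x hx
      rcases eq_or_ne x i with rfl | hxi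
      · rw [hbdef, Function.update_self]
      · rw [hbdef, Function.update_of_ne hxi]
        exact hfr x (by simp [hxi, hx])
    obtain ⟨j, hj, hjb⟩ := C.surj b hb hbfr
    set xn := (p i).toNat with hxndef
    have hxn : (xn : ℤ) = p i := Int.toNat_of_nonneg (by omega)
    have hxn1 : 1 ≤ xn := by omega
    have hxnN : xn ≤ N := by omega
    rcases Nat.even_or_odd j with ⟨q, hq⟩ | ⟨q, hq⟩
    · have hq2 : j = 2*q := by omega
      refine ⟨2*N*q + (xn - 1), ?_, ?_⟩
      · have hb2 : 2*N*q + 2*N ≤ 2*N*m := by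
          have : q + 1 ≤ m := by omega
          calc 2*N*q + 2*N = 2*N*(q+1) := by ring
          _ ≤ 2*N*m := Nat.mul_le_mul_left _ this
        omega
      · have hmod : (2*N*q + (xn - 1)) % (2*N) = xn - 1 := by
          rw [Nat.mul_add_mod]
          exact Nat.mod_eq_of_lt (by omega)
        have hdiv : (2*N*q + (xn - 1)) / (2*N) = q := by
          rw [Nat.mul_add_div (by omega), Nat.div_eq_of_lt (by omega), Nat.add_zero]
        have hlt : 2*N*q + (xn - 1) < N*M := by
          have : q + 1 ≤ m := by omega
          have hb2 : 2*N*q + 2*N ≤ 2*N*m := by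
            calc 2*N*q + 2*N = 2*N*(q+1) := by ring
            _ ≤ 2*N*m := Nat.mul_le_mul_left _ this
          omega
        rw [layE_eq, Nat.mod_eq_of_lt hlt]
        unfold layF
        rw [if_pos (by omega : (2*N*q + (xn - 1)) % (2*N) < N), hmod, hdiv, ← hq2, hjb]
        funext x
        rcases eq_or_ne x i with rfl | hx
        · rw [Function.update_self]
          omega
        · rw [Function.update_of_ne hx, hbdef, Function.update_of_ne hx]
    · have hq2 : j = 2*q + 1 := by omega
      refine ⟨2*N*q + (2*N - xn), ?_, ?_⟩
      · have hb2 : 2*N*q + 2*N ≤ 2*N*m := by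
          have : q + 1 ≤ m := by omega
          calc 2*N*q + 2*N = 2*N*(q+1) := by ring
          _ ≤ 2*N*m := Nat.mul_le_mul_left _ this
        omega
      · have hmod : (2*N*q + (2*N - xn)) % (2*N) = 2*N - xn := by
          rw [Nat.mul_add_mod]
          exact Nat.mod_eq_of_lt (by omega)
        have hdiv : (2*N*q + (2*N - xn)) / (2*N) = q := by
          rw [Nat.mul_add_div (by omega), Nat.div_eq_of_lt (by omega), Nat.add_zero]
        have hlt : 2*N*q + (2*N - xn) < N*M := by
          have : q + 1 ≤ m := by omega
          have hb2 : 2*N*q + 2*N ≤ 2*N*m := by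
            calc 2*N*q + 2*N = 2*N*(q+1) := by ring
            _ ≤ 2*N*m := Nat.mul_le_mul_left _ this
          omega
        rw [layE_eq, Nat.mod_eq_of_lt hlt]
        unfold layF
        rw [if_neg (by omega : ¬ ((2*N*q + (2*N - xn)) % (2*N) < N)), hmod, hdiv, ← hq2, hjb]
        funext x
        rcases eq_or_ne x i with rfl | hx
        · rw [Function.update_self]
          omega
        · rw [Function.update_of_ne hx, hbdef, Function.update_of_ne hx]
  · -- injectivity
    intro t t' ht ht' he
    rw [layE_eq, layE_eq, Nat.mod_eq_of_lt ht, Nat.mod_eq_of_lt ht'] at he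
    have hb : C.e (lidx N t) = C.e (lidx N t') := by
      rw [← layF_bpart' hfi, ← layF_bpart' hfi, he]
    have hJ : lidx N t = lidx N t' :=
      C.inj _ _ (lidx_lt hN hm ht) (lidx_lt hN hm ht') hb
    obtain ⟨hiff, hdiv⟩ := lidx_parity hJ
    have hii := congrFun he i
    rw [layF_i_apply, layF_i_apply] at hii
    have htt := Nat.div_add_mod t (2*N)
    have htt' := Nat.div_add_mod t' (2*N)
    have hdd : 2*N*(t/(2*N)) = 2*N*(t'/(2*N)) := by rw [hdiv]
    by_cases hbr : t % (2*N) < N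
    · rw [if_pos hbr, if_pos (hiff.mp hbr)] at hii
      omega
    · rw [if_neg hbr, if_neg (fun h => hbr (hiff.mpr h))] at hii
      have h1 : t % (2*N) < 2*N := Nat.mod_lt _ (by omega)
      have h2 : t' % (2*N) < 2*N := Nat.mod_lt _ (by omega)
      omega
  · -- adjacency
    intro t
    set a := t % (N*M) with hadef
    have ha : a < N*M := Nat.mod_lt _ hNM
    have key : ∀ u, manhattan (layF N i C.e (u+1) - layF N i C.e u) = 1 := by
      intro u
      have hr : u % (2*N) < 2*N := Nat.mod_lt _ (by omega)
      by_cases hA : u % (2*N) + 1 < N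
      · rw [layF_step_A hA, manhattan_single, abs_one]
      by_cases hB : u % (2*N) + 1 = N
      · rw [layF_step_B hN hfi hB]
        exact C.adj _
      by_cases hC : u % (2*N) + 1 < 2*N
      · rw [layF_step_C (by omega) hC, manhattan_single]
        norm_num
      · have hD : u % (2*N) + 1 = 2*N := by omega
        rw [layF_step_D hN hfi hD]
        have : 2*(u/(2*N)) + 2 = (2*(u/(2*N)) + 1) + 1 := by omega
        rw [this]
        exact C.adj _
    rw [layE_succ hNM, layE_eq, ← hadef]
    rcases eq_or_lt_of_le (show a + 1 ≤ N*M by omega) with heq | hlt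
    · rw [heq, Nat.mod_self, ← layF_top hN hm hper2m, ← heq]
      exact key a
    · rw [Nat.mod_eq_of_lt hlt]
      exact key a

end PatrolAux4
section PatrolAux5

variable {d : ℕ}

/-- Determinism of the step in the interior of the swept coordinate: the step depends
only on the base-cycle point. -/
lemma layE_dint {N M m : ℕ} {i : Fin d} {c : ℕ → Fin d → ℤ}
    (hN : 0 < N) (hm : M = 2*m) (hm0 : 0 < m)
    (hinj : ∀ t t', t < M → t' < M → c t = c t' → t = t')
    (hfi : ∀ j, c j i = 1) (a b : ℕ)
    (ha1 : 1 < layE N M i c a i) (ha2 : layE N M i c a i < (N:ℤ))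
    (hb1 : 1 < layE N M i c b i) (hb2 : layE N M i c b i < (N:ℤ))
    (hx : ∀ x, x ≠ i → layE N M i c a x = layE N M i c b x) :
    layE N M i c (a+1) - layE N M i c a = layE N M i c (b+1) - layE N M i c b := by
  have hNM : 0 < N*M := Nat.mul_pos hN (by omega)
  obtain ⟨a', ha'def⟩ : ∃ x, x = a % (N*M) := ⟨_, rfl⟩
  obtain ⟨b', hb'def⟩ : ∃ x, x = b % (N*M) := ⟨_, rfl⟩
  have ha' : a' < N*M := ha'def ▸ Nat.mod_lt _ hNM
  have hb' : b' < N*M := hb'def ▸ Nat.mod_lt _ hNM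
  -- interiorness forces the residue to be strictly inside a sweep
  have key : ∀ u, u % (N*M) % (2*N) + 1 < 2*N →
      layE N M i c (u+1) = layF N i c (u % (N*M) + 1) ∧
      layE N M i c (u+1) - layE N M i c u
        = layF N i c (u % (N*M) + 1) - layF N i c (u % (N*M)) := by
    intro u hu
    have hlt : u % (N*M) + 1 < N*M := by
      rcases eq_or_lt_of_le (show u % (N*M) + 1 ≤ N*M from Nat.mod_lt _ hNM) with heq | h
      · exact absurd (last_residue hN hm hm0 heq) (by omega)
      · exact h
    rw [layE_succ hNM, Nat.mod_eq_of_lt hlt]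
    exact ⟨rfl, rfl⟩
  -- analyze branch of a'
  have hia := layF_i_apply (N := N) (i := i) (c := c) a'
  have hib := layF_i_apply (N := N) (i := i) (c := c) b'
  have hea : layE N M i c a i = layF N i c a' i := by rw [ha'def]; rfl
  have heb : layE N M i c b i = layF N i c b' i := by rw [hb'def]; rfl
  rw [hea, hia] at ha1 ha2
  rw [heb, hib] at hb1 hb2
  -- base-cycle parts agree
  have hbp : c (lidx N a') = c (lidx N b') := by
    rw [← layF_bpart' hfi, ← layF_bpart' hfi]
    funext x
    rcases eq_or_ne x i with rfl | hxi
    · rw [Function.update_self, Function.update_self]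
    · rw [Function.update_of_ne hxi, Function.update_of_ne hxi]
      rw [ha'def, hb'def]
      exact hx x hxi
  have hJ : lidx N a' = lidx N b' := hinj _ _ (lidx_lt hN hm ha') (lidx_lt hN hm hb') hbp
  obtain ⟨hiff, hdiv⟩ := lidx_parity hJ
  have hdd : 2*N*(a'/(2*N)) = 2*N*(b'/(2*N)) := by rw [hdiv]
  by_cases hbr : a' % (2*N) < N
  · -- ascending branch
    rw [if_pos hbr] at ha1 ha2
    have hbr' : b' % (2*N) < N := hiff.mp hbr
    rw [if_pos hbr'] at hb1 hb2
    have hka := key a (by rw [← ha'def]; omega)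
    have hkb := key b (by rw [← hb'def]; omega)
    obtain ⟨-, hsa⟩ := hka
    obtain ⟨-, hsb⟩ := hkb
    rw [← ha'def] at hsa
    rw [← hb'def] at hsb
    rw [hsa, hsb, layF_step_A (by omega), layF_step_A (by omega)]
  · -- descending branch
    rw [if_neg hbr] at ha1 ha2
    have hbr' : ¬ b' % (2*N) < N := fun h => hbr (hiff.mpr h)
    rw [if_neg hbr'] at hb1 hb2
    have hra : a' % (2*N) < 2*N := Nat.mod_lt _ (by omega)
    have hrb : b' % (2*N) < 2*N := Nat.mod_lt _ (by omega)
    have hka := key a (by rw [← ha'def]; omega)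
    have hkb := key b (by rw [← hb'def]; omega)
    obtain ⟨-, hsa⟩ := hka
    obtain ⟨-, hsb⟩ := hkb
    rw [← ha'def] at hsa
    rw [← hb'def] at hsb
    rw [hsa, hsb, layF_step_C (by omega) (by omega), layF_step_C (by omega) (by omega)]

end PatrolAux5
section PatrolAux6

variable {d : ℕ} {n : Fin d → ℕ} {s : Finset (Fin d)}

/-- Transport a cycle along an equality of coordinate sets. -/
def PCyc.copy (C : PCyc n s) (s' : Finset (Fin d)) (h : s' = s) : PCyc n s' where
  M := C.M
  e := C.e
  Mpos := C.Mpos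
  Meven := C.Meven
  mem := C.mem
  frozen := fun t i hi => C.frozen t i (by rw [← h]; exact hi)
  per := C.per
  surj := fun p hp hf => C.surj p hp (fun i hi => hf i (by rw [h]; exact hi))
  inj := C.inj
  adj := C.adj

lemma PCyc.copy_e (C : PCyc n s) (s' : Finset (Fin d)) (h : s' = s) :
    (C.copy s' h).e = C.e := rfl

lemma PCyc.per_mul (C : PCyc n s) (t q : ℕ) : C.e (t + C.M * q) = C.e t := by
  induction q with
  | zero => simp
  | succ q ih =>
      have : t + C.M * (q+1) = (t + C.M * q) + C.M := by ring
      rw [this, C.per, ih]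

/-- Build a cycle over `insert j s` for any finite set `s` not containing `j`,
where `n j = 2`. -/
lemma cyc_tower (n : Fin d → ℕ) (hn : ∀ i, 2 ≤ n i) (j : Fin d) (hj : n j = 2)
    (s : Finset (Fin d)) : j ∉ s → Nonempty (PCyc n (insert j s)) := by
  classical
  induction s using Finset.induction_on with
  | empty => exact fun _ => ⟨baseCyc n hn j hj⟩
  | @insert a s ha ih =>
      intro hjs
      have hja : j ≠ a := by
        intro h; exact hjs (by rw [h]; exact Finset.mem_insert_self a s)
      obtain ⟨C⟩ := ih (fun h => hjs (Finset.mem_insert_of_mem h))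
      have haj : a ∉ insert j s := by
        simp only [Finset.mem_insert, not_or]
        exact ⟨fun h => hja h.symm, ha⟩
      obtain ⟨D, -, -⟩ := layer_ex C a haj (hn a)
      exact ⟨D.copy _ (Finset.insert_comm a j s ▸ rfl)⟩

/-- From equality of sensing data, extract the boundary signature. -/
lemma sense_eq_sig {p q : Fin d → ℤ} (hp : p ∈ grid n) (hq : q ∈ grid n)
    (h : sense (grid n) 1 p = sense (grid n) 1 q) (i : Fin d) :
    (1 < p i ↔ 1 < q i) ∧ (p i < (n i : ℤ) ↔ q i < (n i : ℤ)) := by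
  have h1 := Set.ext_iff.mp h (Pi.single i 1)
  have h2 := Set.ext_iff.mp h (Pi.single i (-1))
  rw [single_mem_sense hp i 1 (by norm_num), single_mem_sense hq i 1 (by norm_num)] at h1
  rw [single_mem_sense hp i (-1) (by norm_num), single_mem_sense hq i (-1) (by norm_num)] at h2
  have hpb := hp i
  have hqb := hq i
  constructor
  · constructor <;> intro hh
    · have := h2.mp ⟨by omega, by omega⟩; omega
    · have := h2.mpr ⟨by omega, by omega⟩; omega
  · constructor <;> intro hh
    · have := h1.mp ⟨by omega, by omega⟩; omega
    · have := h1.mpr ⟨by omega, by omega⟩; omega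

/-- Coordinates with `n i ≤ 3` are fully determined by the signature. -/
lemma sense_eq_coord {p q : Fin d → ℤ} (hp : p ∈ grid n) (hq : q ∈ grid n)
    (h : sense (grid n) 1 p = sense (grid n) 1 q) (i : Fin d) (h3 : n i ≤ 3) :
    p i = q i := by
  obtain ⟨hA, hB⟩ := sense_eq_sig hp hq h i
  have hpb := hp i
  have hqb := hq i
  have hA1 := hA.mp
  have hA2 := hA.mpr
  have hB1 := hB.mp
  have hB2 := hB.mpr
  by_cases c1 : 1 < p i <;> by_cases c2 : p i < (n i : ℤ)
  · have := hA1 c1; have := hB1 c2; omega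
  · have := hA1 c1; have : ¬ q i < (n i : ℤ) := fun hh => c2 (hB2 hh); omega
  · have : ¬ 1 < q i := fun hh => c1 (hA2 hh); have := hB1 c2; omega
  · have : ¬ 1 < q i := fun hh => c1 (hA2 hh)
    have : ¬ q i < (n i : ℤ) := fun hh => c2 (hB2 hh); omega

end PatrolAux6
section PatrolAux7

variable {d : ℕ}

lemma patrol_of_cyc {n : Fin d → ℕ} (i₀ : Fin d)
    (hsmall : ∀ i, i ≠ i₀ → n i ≤ 3)
    (E : PCyc n Finset.univ)
    (hdint : ∀ a b, 1 < E.e a i₀ → E.e a i₀ < (n i₀ : ℤ) →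
      1 < E.e b i₀ → E.e b i₀ < (n i₀ : ℤ) →
      (∀ x, x ≠ i₀ → E.e a x = E.e b x) →
      E.e (a+1) - E.e a = E.e (b+1) - E.e b) :
    ∃ A : Agent d 0, A.Patrols (grid n) 1 := by
  classical
  have hsurj : ∀ p ∈ grid n, ∃ t, t < E.M ∧ E.e t = p :=
    fun p hp => E.surj p hp (by simp)
  -- full determinism of the step from the sensing data
  have hdet : ∀ a b, sense (grid n) 1 (E.e a) = sense (grid n) 1 (E.e b) →
      E.e (a+1) - E.e a = E.e (b+1) - E.e b := by
    intro a b h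
    have hpa := E.mem a
    have hpb := E.mem b
    have hco : ∀ x, x ≠ i₀ → E.e a x = E.e b x :=
      fun x hx => sense_eq_coord hpa hpb h x (hsmall x hx)
    by_cases heq : E.e a i₀ = E.e b i₀
    · have hfull : E.e a = E.e b := by
        funext x
        by_cases hx : x = i₀
        · rw [hx]; exact heq
        · exact hco x hx
      exact E.step_congr (E.mod_eq_of_e_eq hfull)
    · obtain ⟨hA, hB⟩ := sense_eq_sig hpa hpb h i₀
      have h1a := (hpa i₀).1
      have h2a := (hpa i₀).2
      have h1b := (hpb i₀).1
      have h2b := (hpb i₀).2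
      have hA1 := hA.mp; have hA2 := hA.mpr
      have hB1 := hB.mp; have hB2 := hB.mpr
      have c1 : 1 < E.e a i₀ := by
        by_contra hc
        have : ¬ 1 < E.e b i₀ := fun hh => hc (hA2 hh)
        omega
      have c2 : E.e a i₀ < (n i₀ : ℤ) := by
        by_contra hc
        have : ¬ E.e b i₀ < (n i₀ : ℤ) := fun hh => hc (hB2 hh)
        omega
      exact hdint a b c1 c2 (hA1 c1) (hB1 c2) hco
  -- the agent
  refine ⟨⟨fun S m =>
    (if h : ∃ t, S = sense (grid n) 1 (E.e t)
      then E.e (h.choose + 1) - E.e h.choose else 0, m)⟩, ?_, ?_⟩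
  case refine_1 =>
    -- validity
    intro p hp m
    obtain ⟨t, -, rfl⟩ := hsurj p hp
    have hex : ∃ u, sense (grid n) 1 (E.e t) = sense (grid n) 1 (E.e u) := ⟨t, rfl⟩
    simp only [dif_pos hex]
    have hstep : E.e (hex.choose + 1) - E.e hex.choose = E.e (t+1) - E.e t :=
      hdet _ _ hex.choose_spec.symm
    rw [hstep]
    refine ⟨E.adj t, ?_⟩
    rw [mem_sense]
    constructor
    · have hsum : E.e t + (E.e (t+1) - E.e t) = E.e (t+1) := by ring
      rw [hsum]
      exact E.mem (t+1)
    · rw [E.adj t]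
      norm_num
  case refine_2 =>
    intro v₁ hv₁ m v hv
    obtain ⟨t₀, -, rfl⟩ := hsurj v₁ hv₁
    obtain ⟨t₁, -, rfl⟩ := hsurj v hv
    -- the step function of the agent at cycle points
    set A : Agent d 0 := ⟨fun S m =>
      (if h : ∃ t, S = sense (grid n) 1 (E.e t)
        then E.e (h.choose + 1) - E.e h.choose else 0, m)⟩ with hAdef
    have hstep : ∀ t m', (A.act (sense (grid n) 1 (E.e t)) m').1 = E.e (t+1) - E.e t := by
      intro t m'
      have hex : ∃ u, sense (grid n) 1 (E.e t) = sense (grid n) 1 (E.e u) := ⟨t, rfl⟩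
      simp only [hAdef, dif_pos hex]
      exact hdet _ _ hex.choose_spec.symm
    have htraj : ∀ s : ℕ, (A.traj (grid n) 1 (E.e t₀) m s).1 = E.e (t₀ + s) := by
      intro s
      induction s with
      | zero => rfl
      | succ s ih =>
          show (A.traj (grid n) 1 (E.e t₀) m s).1 +
            (A.act (sense (grid n) 1 (A.traj (grid n) 1 (E.e t₀) m s).1)
              (A.traj (grid n) 1 (E.e t₀) m s).2).1 = _
          rw [ih, hstep]
          have : t₀ + (s + 1) = (t₀ + s) + 1 := by omega
          rw [this]
          ring
    -- choose the time to reach `E.e t₁`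
    have hK : t₀ ≤ E.M * (t₀ / E.M + 1) := by
      have h1 := Nat.div_add_mod t₀ E.M
      have h2 := Nat.mod_lt t₀ E.Mpos
      have h3 : E.M * (t₀ / E.M + 1) = E.M * (t₀ / E.M) + E.M := by ring
      omega
    refine ⟨t₁ + E.M * (t₀ / E.M + 1) - t₀, ?_⟩
    rw [htraj]
    have harith : t₀ + (t₁ + E.M * (t₀ / E.M + 1) - t₀) = t₁ + E.M * (t₀ / E.M + 1) := by
      omega
    rw [harith, E.per_mul]

/-- The generic construction: a distinguished coordinate `j` with `n j = 2` and a
swept coordinate `i₀ ≠ j` such that all other coordinates are at most 3. -/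
lemma assemble {n : Fin d → ℕ} (hn : ∀ i, 2 ≤ n i) (i₀ j : Fin d) (hji : j ≠ i₀)
    (hj : n j = 2) (hsmall : ∀ i, i ≠ i₀ → n i ≤ 3) :
    ∃ A : Agent d 0, A.Patrols (grid n) 1 := by
  classical
  have hjmem : j ∈ Finset.univ.erase i₀ := Finset.mem_erase.mpr ⟨hji, Finset.mem_univ j⟩
  obtain ⟨C'⟩ := cyc_tower n hn j hj ((Finset.univ.erase i₀).erase j)
    (Finset.notMem_erase j _)
  have hins : insert j ((Finset.univ.erase i₀).erase j) = Finset.univ.erase i₀ :=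
    Finset.insert_erase hjmem
  set C := C'.copy (Finset.univ.erase i₀) hins.symm with hCdef
  obtain ⟨D, hDM, hDe⟩ := layer_ex C i₀ (Finset.notMem_erase i₀ _) (hn i₀)
  have huniv : (Finset.univ : Finset (Fin d)) = insert i₀ (Finset.univ.erase i₀) :=
    (Finset.insert_erase (Finset.mem_univ i₀)).symm
  set E := D.copy Finset.univ huniv with hEdef
  have hEe : E.e = layE (n i₀) C.M i₀ C.e := hDe
  obtain ⟨m, hm'⟩ := C.Meven
  have hm : C.M = 2*m := by omega
  have hm0 : 0 < m := by have := C.Mpos; omega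
  have hfi : ∀ t, C.e t i₀ = 1 := fun t => C.frozen t i₀ (Finset.notMem_erase i₀ _)
  refine patrol_of_cyc i₀ hsmall E ?_
  intro a b h1 h2 h3 h4 h5
  rw [hEe] at h1 h2 h3 h4 ⊢
  have h5' : ∀ x, x ≠ i₀ → layE (n i₀) C.M i₀ C.e a x = layE (n i₀) C.M i₀ C.e b x := by
    intro x hx
    have := h5 x hx
    rwa [hEe] at this
  exact layE_dint (by have := hn i₀; omega) hm hm0 C.inj hfi a b h1 h2 h3 h4 h5'

end PatrolAux7
/-- If at most one index `i` has `n i > 3` and `∏ i, min (n i) 3` is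
even, then some agent algorithm with `0` bits of memory and sensing range `V = 1`
patrols the grid `[n 0] × ⋯ × [n (d-1)]`. -/
theorem zero_bit_patrol_exists_V_one {d : ℕ} (hd : 1 ≤ d) (n : Fin d → ℕ)
    (hn : ∀ i, 2 ≤ n i)
    (h1 : ∀ i j, 3 < n i → 3 < n j → i = j)
    (h2 : Even (∏ i, min (n i) 3)) :
    ∃ A : Agent d 0, A.Patrols (grid n) 1 := by
  classical
  have hj2 : ∃ j, n j = 2 := by
    by_contra h
    push_neg at h
    have hmin : ∀ i ∈ (Finset.univ : Finset (Fin d)), min (n i) 3 = 3 := by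
      intro i _
      have := hn i; have := h i; omega
    rw [Finset.prod_congr rfl hmin, Finset.prod_const] at h2
    have hodd : Odd (3 ^ (Finset.univ : Finset (Fin d)).card) := Odd.pow ⟨1, by norm_num⟩
    exact (Nat.not_even_iff_odd.mpr hodd) h2
  obtain ⟨j, hj⟩ := hj2
  by_cases hone : ∀ i : Fin d, i = j
  · obtain ⟨C⟩ := cyc_tower n hn j hj ∅ (Finset.notMem_empty j)
    refine patrol_of_cyc j (fun i hi => absurd (hone i) hi)
      (C.copy Finset.univ (by ext x; simp [hone x])) ?_
    intro a b hA1 hA2 hA3 hA4 hA5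
    rw [hj] at hA2
    have h22 : ((2:ℕ):ℤ) = 2 := by norm_num
    rw [h22] at hA2
    omega
  · push_neg at hone
    obtain ⟨i', hi'⟩ := hone
    by_cases hbig : ∃ i, 3 < n i
    · obtain ⟨i₀, hi₀⟩ := hbig
      have hji : j ≠ i₀ := fun h => by rw [h] at hj; omega
      exact assemble hn i₀ j hji hj (fun i hi => by
        by_contra hc
        push_neg at hc
        exact hi (h1 i i₀ hc hi₀))
    · push_neg at hbig
      exact assemble hn i' j (Ne.symm hi') hj (fun i _ => hbig i)
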